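/- arXiv:0708.1419 — 2 statements merged into one kernel-verified Lean document; each statement's English description precedes it below -/
import Mathlib

section
/- Let G be a transitive groupoid acting on the right on two families of sets F and F₁, let ω be a section of F and ω₁ a section of F₁, and assume F is homogeneous, i.e. for every object y the isotropy group G(y,y) acts transitively on F(y). Then Stab(ω) ⊆ Stab(ω₁) (i.e. every morphism f : x → y with ω(y)·f = ω(x) also satisfies ω₁(y)·f = ω₁(x)) if and only if there exists a G-equivariant map c : F → F₁ (meaning c : F(x) → F₁(x) for every object x with c(u·f) = c(u)·f for all morphisms f : x → y and all u ∈ F(y)) such that c(ω(x)) = ω₁(x) for every object x. -/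
open CategoryTheory

/-- A right action of a groupoid `G` on a family of sets `F`:
to each object `x` a set `F x`, to each morphism `f : x ⟶ y` a map
`F y → F x`, `u ↦ u·f = act f u`, with `u·1 = u` and `(u·f)·g = u·(g ≫ f)`. -/
structure RightAction (G : Type*) [Groupoid G] where
  F : G → Type*
  act : ∀ {x y : G}, (x ⟶ y) → F y → F x
  act_id : ∀ (y : G) (u : F y), act (𝟙 y) u = u
  act_comp : ∀ {w x y : G} (g : w ⟶ x) (f : x ⟶ y) (u : F y),
    act g (act f u) = act (g ≫ f) u

/-- Let a transitive groupoid `G` act on families `F` (homogeneous) and `F₁`,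
with sections `ω`, `ω₁`. Then `Stab(ω) ⊆ Stab(ω₁)` if and only if there is a
`G`-equivariant map `c : F → F₁` with `c(ω(x)) = ω₁(x)` for every object `x`. -/
theorem stabilizer_inclusion_iff_equivariant_map {G : Type*} [Groupoid G]
    (A A₁ : RightAction G) (ω : ∀ x : G, A.F x) (ω₁ : ∀ x : G, A₁.F x)
    (htrans : ∀ x y : G, Nonempty (x ⟶ y))
    (hhom : ∀ (y : G) (u v : A.F y), ∃ g : y ⟶ y, A.act g u = v) :
    (∀ {x y : G} (f : x ⟶ y),
        A.act f (ω y) = ω x → A₁.act f (ω₁ y) = ω₁ x) ↔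
    (∃ c : ∀ x : G, A.F x → A₁.F x,
      (∀ {x y : G} (f : x ⟶ y) (u : A.F y),
        c x (A.act f u) = A₁.act f (c y u)) ∧
      (∀ x : G, c x (ω x) = ω₁ x)) := by
  constructor
  · intro hstab
    refine ⟨fun x u => A₁.act (Classical.choose (hhom x (ω x) u)) (ω₁ x), ?_, ?_⟩
    · intro x y f u
      set g := Classical.choose (hhom y (ω y) u) with hg
      have hgu : A.act g (ω y) = u := Classical.choose_spec (hhom y (ω y) u)
      set g' := Classical.choose (hhom x (ω x) (A.act f u)) with hg'
      have hg'u : A.act g' (ω x) = A.act f u :=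
        Classical.choose_spec (hhom x (ω x) (A.act f u))
      -- h := inv g' ≫ f ≫ g stabilizes ω
      have hstab1 : A.act (Groupoid.inv g' ≫ f ≫ g) (ω y) = ω x := by
        rw [← A.act_comp, ← A.act_comp, hgu, ← hg'u, A.act_comp,
          Groupoid.inv_comp, A.act_id]
      have h1 := hstab _ hstab1
      calc A₁.act g' (ω₁ x) = A₁.act g' (A₁.act (Groupoid.inv g' ≫ f ≫ g) (ω₁ y)) := by
            rw [h1]
        _ = A₁.act f (A₁.act g (ω₁ y)) := by
            rw [A₁.act_comp, A₁.act_comp, ← Category.assoc, ← Category.assoc,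
              Groupoid.comp_inv, Category.id_comp]
    · intro x
      have hgu : A.act (Classical.choose (hhom x (ω x) (ω x))) (ω x) = ω x :=
        Classical.choose_spec (hhom x (ω x) (ω x))
      exact hstab _ hgu
  · rintro ⟨c, hequi, hc⟩ x y f hf
    have := hequi f (ω y)
    rw [hf, hc, hc] at this
    exact this.symm
end

section
/- Let φ : G' → G be a full functor between transitive groupoids which is the identity on objects, let G' act on the right on a family F', with quotient family F₁(x) = F'(x)/~ (modulo the kernel isotropy K(x)) carrying the induced right G-action, and let ω' be a section of F' with induced section ω₁(x) = [ω'(x)] of F₁. Let G act on the right on a further family F with section ω, assume F is homogeneous (each isotropy group G(y,y) acts transitively on F(y)), and assume φ maps Stab_{F'}(ω') into Stab_F(ω). Then every f ∈ Stab_F(ω) admits a φ-preimage f' ∈ Stab_{F'}(ω') if and only if there exists a G-equivariant map c : F → F₁ with c(ω(x)) = ω₁(x) for every object x. (This is the abstract form of the projection theorem: the projection Stab_{F'}(ω') → Stab_F(ω) is an epimorphism iff the Vessiot structure equations c(ω) = ω₁ hold for some equivariant c.) -/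
open CategoryTheory

/-- The equivalence `u ~ u'` on `F' y` modulo the kernel
`K(y) = { k : y ⟶ y | φ(k) = 1 }` of a functor `φ`: `u' = u·k` for some
`k ∈ K(y)`. -/
def kerRel {C D : Type*} [Groupoid C] [Groupoid D] (φ : C ⥤ D)
    (A : RightAction C) (y : C) (u u' : A.F y) : Prop :=
  ∃ k : y ⟶ y, φ.map k = 𝟙 (φ.obj y) ∧ u' = A.act k u

lemma kerRel_equiv {C D : Type*} [Groupoid C] [Groupoid D] (φ : C ⥤ D)
    (A : RightAction C) (y : C) : Equivalence (kerRel φ A y) := by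
  constructor
  · intro u; exact ⟨𝟙 y, φ.map_id y, (A.act_id y u).symm⟩
  · rintro u v ⟨k, hk, rfl⟩
    refine ⟨Groupoid.inv k, ?_, ?_⟩
    · simp [Groupoid.inv_eq_inv, hk]
    · rw [A.act_comp, Groupoid.inv_comp, A.act_id]
  · rintro u v w ⟨k, hk, rfl⟩ ⟨l, hl, rfl⟩
    exact ⟨l ≫ k, by simp [hl, hk], A.act_comp l k u⟩

/-- Abstract projection theorem. Let `φ : G' ⥤ G` be a full functor between
transitive groupoids which is the identity (bijective) on objects, let `G'`
act on a family `F'` with section `ω'`, giving the quotient family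
`F₁(x) = F'(x)/~` (modulo the kernel isotropy) with induced `G`-action
`[u]·φ(f') = [u·f']` and induced section `ω₁(x) = [ω'(x)]`. Let `G` act on a
homogeneous family `F` with section `ω`, and assume `φ` maps `Stab_{F'}(ω')`
into `Stab_F(ω)`. Then every `f ∈ Stab_F(ω)` admits a `φ`-preimage in
`Stab_{F'}(ω')` if and only if there is a `G`-equivariant map `c : F → F₁`
with `c(ω(x)) = ω₁(x)` for all objects `x` (the Vessiot structure
equations). -/
theorem projection_theorem {C D : Type*}
    [Groupoid C] [Groupoid D] (φ : C ⥤ D)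
    (htransC : ∀ x y : C, Nonempty (x ⟶ y))
    (htransD : ∀ a b : D, Nonempty (a ⟶ b))
    (hfull : ∀ {x y : C} (g : φ.obj x ⟶ φ.obj y), ∃ f : x ⟶ y, φ.map f = g)
    (hobj : Function.Bijective φ.obj)
    (A : RightAction C) (ω' : ∀ x : C, A.F x)
    (B : RightAction D) (ω : ∀ d : D, B.F d)
    (hhom : ∀ (d : D) (u v : B.F d), ∃ g : d ⟶ d, B.act g u = v)
    (hmap : ∀ {x y : C} (f' : x ⟶ y), A.act f' (ω' y) = ω' x →
      B.act (φ.map f') (ω (φ.obj y)) = ω (φ.obj x)) :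
    (∀ {x y : C} (f : φ.obj x ⟶ φ.obj y),
      B.act f (ω (φ.obj y)) = ω (φ.obj x) →
        ∃ f' : x ⟶ y, φ.map f' = f ∧ A.act f' (ω' y) = ω' x) ↔
    (∃ c : ∀ x : C, B.F (φ.obj x) → Quot (kerRel φ A x),
      (∀ {x y : C} (f' : x ⟶ y) (u : B.F (φ.obj y)) (v : A.F y),
        c y u = Quot.mk (kerRel φ A y) v →
          c x (B.act (φ.map f') u) = Quot.mk (kerRel φ A x) (A.act f' v)) ∧
      (∀ x : C, c x (ω (φ.obj x)) = Quot.mk (kerRel φ A x) (ω' x))) := by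
  constructor
  · intro hlift
    classical
    choose gg hg using fun (x : C) (u : B.F (φ.obj x)) => hhom (φ.obj x) (ω (φ.obj x)) u
    choose gg' hgg' using fun (x : C) (u : B.F (φ.obj x)) =>
      hfull (x := x) (y := x) (gg x u)
    have L : ∀ {x y : C} (h' : x ⟶ y) (w : B.F (φ.obj x)),
        B.act (φ.map h') (ω (φ.obj y)) = w →
        Quot.mk (kerRel φ A x) (A.act (gg' x w) (ω' x))
          = Quot.mk (kerRel φ A x) (A.act h' (ω' y)) := by
      intro x y h' w hw
      have hstab : B.act (Groupoid.inv (gg x w) ≫ φ.map h') (ω (φ.obj y))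
          = ω (φ.obj x) := by
        have h0 : ∀ {d : D} (g : d ⟶ d) (w₀ : B.F d), B.act g (ω d) = w₀ →
            B.act (Groupoid.inv g) w₀ = ω d := by
          rintro d g w₀ rfl
          rw [B.act_comp, Groupoid.inv_comp, B.act_id]
        rw [← B.act_comp, hw, h0 (gg x w) w (hg x w)]
      obtain ⟨p, hp, hps⟩ := hlift _ hstab
      apply Quot.sound
      refine ⟨h' ≫ Groupoid.inv p ≫ Groupoid.inv (gg' x w), ?_, ?_⟩
      · simp [Groupoid.inv_eq_inv, hp, hgg']
      · rw [← hps, A.act_comp, A.act_comp]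
        congr 1
        simp [Groupoid.inv_eq_inv]
    refine ⟨fun x u => Quot.mk _ (A.act (gg' x u) (ω' x)), ?_, ?_⟩
    · intro x y f' u v hc
      obtain ⟨k, hk, hv⟩ := (kerRel_equiv φ A y).eqvGen_iff.mp (Quot.eq.mp hc)
      have hv' : v = A.act (k ≫ gg' y u) (ω' y) := by
        rw [hv, A.act_comp]
      have hφq : φ.map (f' ≫ (k ≫ gg' y u)) = φ.map f' ≫ gg y u := by
        rw [φ.map_comp, φ.map_comp, hk, hgg', Category.id_comp]
      have hw : B.act (φ.map (f' ≫ (k ≫ gg' y u))) (ω (φ.obj y))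
          = B.act (φ.map f') u := by
        rw [hφq, ← B.act_comp, hg]
      have := L (f' ≫ (k ≫ gg' y u)) (B.act (φ.map f') u) hw
      show Quot.mk (kerRel φ A x) (A.act (gg' x (B.act (φ.map f') u)) (ω' x)) = _
      rw [this, hv', A.act_comp]
    · intro x
      have := L (𝟙 x) (ω (φ.obj x)) (by rw [φ.map_id, B.act_id])
      simpa [A.act_id] using this
  · rintro ⟨c, hceq, hcs⟩ x y f hf
    obtain ⟨f'', hf''⟩ := hfull f
    have h1 := hceq f'' (ω (φ.obj y)) (ω' y) (hcs y)
    rw [hf'', hf, hcs x] at h1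
    obtain ⟨k, hk, hv⟩ := (kerRel_equiv φ A x).eqvGen_iff.mp (Quot.eq.mp h1.symm)
    refine ⟨k ≫ f'', by rw [φ.map_comp, hk, hf'', Category.id_comp], ?_⟩
    rw [← A.act_comp]
    exact hv.symm
end
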